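/- Let R be a commutative ring, n ≥ 2, d ∈ ℕ* ∪ {∞}, and M an R-module. If for every prime ideal 𝔭 of R the localization M_𝔭 is FP_n^{≤d}-injective over R_𝔭, then M is FP_n^{≤d}-injective over R. -/
import Mathlib

universe u

/-- `M` is a finitely `n`-presented `R`-module. -/
def FinNPres (R : Type u) [Ring R] : ℕ → (M : Type u) → [AddCommGroup M] → [Module R M] → Prop
  | 0, M, _, _ => Module.Finite R M
  | n+1, M, _, _ => ∃ (k : ℕ) (f : (Fin k → R) →ₗ[R] M), Function.Surjective f ∧
      FinNPres R n (LinearMap.ker f)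

/-- `M` has projective dimension at most `d` (finite `d`). -/
def ProjDimLE (R : Type u) [Ring R] : ℕ → (M : Type u) → [AddCommGroup M] → [Module R M] → Prop
  | 0, M, _, _ => Module.Projective R M
  | d+1, M, _, _ => ∃ (ι : Type u) (f : (ι →₀ R) →ₗ[R] M), Function.Surjective f ∧
      ProjDimLE R d (LinearMap.ker f)

/-- Projective dimension at most `d` for `d : ℕ∞`; `d = ⊤` imposes no condition. -/
def ProjDimLE' (R : Type u) [Ring R] (d : ℕ∞) (M : Type u) [AddCommGroup M] [Module R M] : Prop :=
  ∀ k : ℕ, (k : ℕ∞) = d → ProjDimLE R k M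

/-- `Ext¹_R(M, N) = 0`, expressed by the splitting of all extensions of `M` by `N`. -/
def Ext1Zero (R : Type u) [Ring R] (M N : Type u) [AddCommGroup M] [Module R M]
    [AddCommGroup N] [Module R N] : Prop :=
  ∀ (X : Type u) [AddCommGroup X] [Module R X] (i : N →ₗ[R] X) (p : X →ₗ[R] M),
    Function.Injective i → Function.Surjective p → LinearMap.range i = LinearMap.ker p →
    ∃ r : X →ₗ[R] N, r ∘ₗ i = LinearMap.id

/-- `N` is `FPₙ^{≤d}`-injective: `Ext¹_R(K, N) = 0` for every finitely `n`-presented `K`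
of projective dimension at most `d`. -/
def FPdInj (R : Type u) [Ring R] (n : ℕ) (d : ℕ∞) (N : Type u)
    [AddCommGroup N] [Module R N] : Prop :=
  ∀ (K : Type u) [AddCommGroup K] [Module R K],
    FinNPres R n K → ProjDimLE' R d K → Ext1Zero R K N

/-- `M` is `FPₙ^{≤d}`-projective: `Ext¹_R(M, N) = 0` for every `FPₙ^{≤d}`-injective `N`. -/
def FPdProj (R : Type u) [Ring R] (n : ℕ) (d : ℕ∞) (M : Type u)
    [AddCommGroup M] [Module R M] : Prop :=
  ∀ (N : Type u) [AddCommGroup N] [Module R N], FPdInj R n d N → Ext1Zero R M N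

section Aux

/-- From a retraction of `i` in a short exact sequence, get a section of `p`. -/
theorem exists_section_of_retraction {R : Type u} [Ring R] {M X K : Type u}
    [AddCommGroup M] [Module R M] [AddCommGroup X] [Module R X] [AddCommGroup K] [Module R K]
    (i : M →ₗ[R] X) (p : X →ₗ[R] K) (hp : Function.Surjective p)
    (hrange : LinearMap.range i = LinearMap.ker p)
    (r : X →ₗ[R] M) (hri : r ∘ₗ i = LinearMap.id) :
    ∃ s : K →ₗ[R] X, p ∘ₗ s = LinearMap.id := by
  have hpi : ∀ m : M, p (i m) = 0 := by
    intro m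
    have : i m ∈ LinearMap.ker p := hrange ▸ LinearMap.mem_range_self i m
    exact this
  set q : X →ₗ[R] X := LinearMap.id - i ∘ₗ r with hq
  have hle : LinearMap.ker p ≤ LinearMap.ker q := by
    intro x hx
    rw [← hrange] at hx
    obtain ⟨m, rfl⟩ := hx
    have hrm : r (i m) = m := LinearMap.congr_fun hri m
    simp [hq, hrm]
  let e := p.quotKerEquivOfSurjective hp
  refine ⟨((LinearMap.ker p).liftQ q hle) ∘ₗ e.symm.toLinearMap, ?_⟩
  ext k
  obtain ⟨x, rfl⟩ := hp k
  have hxk : e.symm (p x) = Submodule.Quotient.mk x := by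
    rw [LinearEquiv.symm_apply_eq]
    rfl
  simp only [LinearMap.coe_comp, LinearEquiv.coe_coe, Function.comp_apply, hxk,
    Submodule.liftQ_apply, LinearMap.id_coe, id_eq]
  simp [hq, hpi]

/-- From a section of `p` in a short exact sequence, get a retraction of `i`. -/
theorem exists_retraction_of_section {R : Type u} [Ring R] {M X K : Type u}
    [AddCommGroup M] [Module R M] [AddCommGroup X] [Module R X] [AddCommGroup K] [Module R K]
    (i : M →ₗ[R] X) (p : X →ₗ[R] K) (hi : Function.Injective i)
    (hrange : LinearMap.range i = LinearMap.ker p)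
    (s : K →ₗ[R] X) (hs : p ∘ₗ s = LinearMap.id) :
    ∃ r : X →ₗ[R] M, r ∘ₗ i = LinearMap.id := by
  have hmem : ∀ x : X, ((LinearMap.id : X →ₗ[R] X) - s ∘ₗ p) x ∈ LinearMap.range i := by
    intro x
    rw [hrange, LinearMap.mem_ker]
    have hps : p (s (p x)) = p x := LinearMap.congr_fun hs (p x)
    simp [hps]
  let ψ : X →ₗ[R] LinearMap.range i :=
    LinearMap.codRestrict _ ((LinearMap.id : X →ₗ[R] X) - s ∘ₗ p) hmem
  let eI : M ≃ₗ[R] LinearMap.range i := LinearEquiv.ofInjective i hi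
  refine ⟨eI.symm.toLinearMap ∘ₗ ψ, ?_⟩
  ext m
  have h0 : p (i m) = 0 := by
    have : i m ∈ LinearMap.ker p := hrange ▸ LinearMap.mem_range_self i m
    exact this
  simp only [LinearMap.coe_comp, LinearEquiv.coe_coe, Function.comp_apply,
    LinearMap.id_coe, id_eq]
  rw [LinearEquiv.symm_apply_eq]
  apply Subtype.ext
  have hψ : (ψ (i m) : X) = i m := by simp [ψ, h0]
  rw [hψ]
  exact (LinearEquiv.ofInjective_apply i m).symm




theorem finNPres_finite {R : Type u} [Ring R] : ∀ {n : ℕ} {M : Type u}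
    [AddCommGroup M] [Module R M], FinNPres R n M → Module.Finite R M
  | 0, _, _, _, hM => hM
  | n+1, _, _, _, ⟨_, f, hf, _⟩ => Module.Finite.of_surjective f hf

theorem finNPres_finitePresentation {R : Type u} [CommRing R] {n : ℕ} (hn : 1 ≤ n)
    {M : Type u} [AddCommGroup M] [Module R M] (hM : FinNPres R n M) :
    Module.FinitePresentation R M := by
  obtain ⟨m, rfl⟩ : ∃ m, n = m + 1 := ⟨n - 1, by omega⟩
  obtain ⟨k, f, hf, hker⟩ := hM
  haveI : Module.Finite R (LinearMap.ker f) := finNPres_finite hker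
  exact Module.finitePresentation_of_surjective f hf (Module.Finite.iff_fg.mp inferInstance)

/-- The localization map for finite free modules in `Pi` form. -/
noncomputable def piLocMap {R : Type u} [CommRing R] (S : Submonoid R) (k : ℕ) :
    (Fin k → R) →ₗ[R] (Fin k → Localization S) :=
  ((Finsupp.linearEquivFunOnFinite (Localization S) (Localization S)
      (Fin k)).restrictScalars R).toLinearMap
    ∘ₗ (Finsupp.mapRange.linearMap (Algebra.linearMap R (Localization S))
    ∘ₗ (Finsupp.linearEquivFunOnFinite R R (Fin k)).symm.toLinearMap)

instance piLocMap_isLocalizedModule {R : Type u} [CommRing R] (S : Submonoid R) (k : ℕ) :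
    IsLocalizedModule S (piLocMap S k) := by
  unfold piLocMap
  infer_instance

theorem finNPres_loc {R : Type u} [CommRing R] (S : Submonoid R) :
    ∀ {n : ℕ} {K KL : Type u} [AddCommGroup K] [Module R K]
    [AddCommGroup KL] [Module R KL] [Module (Localization S) KL]
    [IsScalarTower R (Localization S) KL]
    (φ : K →ₗ[R] KL) [IsLocalizedModule S φ],
    FinNPres R n K → FinNPres (Localization S) n KL := by
  intro n
  induction n with
  | zero =>
    intro K KL _ _ _ _ _ _ φ _ hK
    haveI : Module.Finite R K := hK
    exact Module.Finite.equiv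
      (IsLocalizedModule.isBaseChange S (Localization S) φ).equiv
  | succ n ih =>
    intro K KL _ _ _ _ _ _ φ _ hK
    obtain ⟨k, f, hf, hker⟩ := hK
    refine ⟨k, IsLocalizedModule.mapExtendScalars S (piLocMap S k) φ (Localization S) f,
      ?_, ?_⟩
    · exact IsLocalizedModule.map_surjective S (piLocMap S k) φ f hf
    · have hkeq : LinearMap.ker
          (IsLocalizedModule.mapExtendScalars S (piLocMap S k) φ (Localization S) f)
          = (LinearMap.ker f).localized' (Localization S) S (piLocMap S k) := by
        exact (LinearMap.localized'_ker_eq_ker_localizedMap (Localization S) S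
          (piLocMap S k) φ f).symm
      rw [hkeq]
      exact ih ((LinearMap.ker f).toLocalized' (Localization S) S (piLocMap S k)) hker

theorem projDimLE_loc {R : Type u} [CommRing R] (S : Submonoid R) :
    ∀ {d : ℕ} {K KL : Type u} [AddCommGroup K] [Module R K]
    [AddCommGroup KL] [Module R KL] [Module (Localization S) KL]
    [IsScalarTower R (Localization S) KL]
    (φ : K →ₗ[R] KL) [IsLocalizedModule S φ],
    ProjDimLE R d K → ProjDimLE (Localization S) d KL := by
  intro d
  induction d with
  | zero =>
    intro K KL _ _ _ _ _ _ φ _ hK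
    haveI : Module.Projective R K := hK
    exact Module.projective_of_isLocalizedModule S φ
  | succ d ih =>
    intro K KL _ _ _ _ _ _ φ _ hK
    obtain ⟨ι, f, hf, hker⟩ := hK
    refine ⟨ι, IsLocalizedModule.mapExtendScalars S
      (Finsupp.mapRange.linearMap (α := ι) (Algebra.linearMap R (Localization S)))
      φ (Localization S) f, ?_, ?_⟩
    · exact IsLocalizedModule.map_surjective S _ φ f hf
    · have hkeq : LinearMap.ker
          (IsLocalizedModule.mapExtendScalars S
            (Finsupp.mapRange.linearMap (α := ι) (Algebra.linearMap R (Localization S)))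
            φ (Localization S) f)
          = (LinearMap.ker f).localized' (Localization S) S
            (Finsupp.mapRange.linearMap (α := ι) (Algebra.linearMap R (Localization S))) := by
        exact (LinearMap.localized'_ker_eq_ker_localizedMap (Localization S) S
          (Finsupp.mapRange.linearMap (α := ι) (Algebra.linearMap R (Localization S))) φ f).symm
      rw [hkeq]
      exact ih ((LinearMap.ker f).toLocalized' (Localization S) S
        (Finsupp.mapRange.linearMap (α := ι) (Algebra.linearMap R (Localization S)))) hker

end Aux

theorem fpdInj_of_localizations (R : Type u) [CommRing R] (n : ℕ) (hn : 2 ≤ n)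
    (d : ℕ∞) (hd : 1 ≤ d) (M : Type u) [AddCommGroup M] [Module R M]
    (h : ∀ (𝔭 : Ideal R) [𝔭.IsPrime],
      FPdInj (Localization.AtPrime 𝔭) n d (LocalizedModule 𝔭.primeCompl M)) :
    FPdInj R n d M := by
  intro K _ _ hKfp hKpd
  intro X _ _ i p hi hp hrange
  haveI : Module.FinitePresentation R K := finNPres_finitePresentation (by omega) hKfp
  have hexact : Function.Exact i p := LinearMap.exact_iff.mpr hrange.symm
  have H : ∀ (I : Ideal R) (_ : I.IsMaximal),
      ∃ (g : _ →ₗ[Localization.AtPrime I] _),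
        (LocalizedModule.map I.primeCompl p).comp g = LinearMap.id := by
    intro I hI
    haveI : I.IsPrime := hI.isPrime
    set S := I.primeCompl
    have hinj : Function.Injective (LocalizedModule.map S i) :=
      LocalizedModule.map_injective S i hi
    have hsurj : Function.Surjective (LocalizedModule.map S p) :=
      LocalizedModule.map_surjective S p hp
    have h1 : LinearMap.range (LocalizedModule.map S i) =
        (LinearMap.range i).localized' (Localization S) S
          (LocalizedModule.mkLinearMap S X) :=
      (LinearMap.localized'_range_eq_range_localizedMap (Localization S) S
        (LocalizedModule.mkLinearMap S M) (LocalizedModule.mkLinearMap S X) i).symm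
    have h2 : LinearMap.ker (LocalizedModule.map S p) =
        (LinearMap.ker p).localized' (Localization S) S
          (LocalizedModule.mkLinearMap S X) :=
      (LinearMap.localized'_ker_eq_ker_localizedMap (Localization S) S
        (LocalizedModule.mkLinearMap S X) (LocalizedModule.mkLinearMap S K) p).symm
    have hrange' : LinearMap.range (LocalizedModule.map S i) =
        LinearMap.ker (LocalizedModule.map S p) := by
      rw [h1, h2, hrange]
    have hK' : FinNPres (Localization S) n (LocalizedModule S K) :=
      finNPres_loc S (LocalizedModule.mkLinearMap S K) hKfp
    have hpd' : ProjDimLE' (Localization S) d (LocalizedModule S K) := fun k hk =>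
      projDimLE_loc S (LocalizedModule.mkLinearMap S K) (hKpd k hk)
    obtain ⟨r, hr⟩ := h I (LocalizedModule S K) hK' hpd' (LocalizedModule S X)
      (LocalizedModule.map S i) (LocalizedModule.map S p) hinj hsurj hrange'
    exact exists_section_of_retraction (LocalizedModule.map S i)
      (LocalizedModule.map S p) hsurj hrange' r hr
  obtain ⟨g, hg⟩ := LinearMap.split_surjective_of_localization_maximal p H
  exact exists_retraction_of_section i p hi hrange g hg
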